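/- arXiv:2001.00822 — 2 statements merged into one kernel-verified Lean document; each statement's English description precedes it below -/
import Mathlib

section
/- Let C_n be the cyclic group of order n, ε : ℤ[C_n] → ℤ the augmentation map, and J a ℤ[C_n]-module such that J ⊕ ℤ[C_n] ≅ I(C_n) ⊕ ℤ[C_n] where I(C_n) = ker(ε) is the augmentation ideal. If ℤ[C_n] has stably free cancellation (every stably free ℤ[C_n]-module is free), then J ≅ I(C_n). -/
/-- The integral group ring `ℤ[C_n]` of the cyclic group of order `n`. -/
abbrev ZC (n : ℕ) : Type := MonoidAlgebra ℤ (Multiplicative (ZMod n))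

/-- The augmentation map `ℤ[C_n] → ℤ`, sending each group element to 1. -/
noncomputable def aug (n : ℕ) : ZC n →ₐ[ℤ] ℤ :=
  MonoidAlgebra.lift ℤ ℤ (Multiplicative (ZMod n)) 1

/-- The augmentation ideal `I(C_n) = ker ε`. -/
noncomputable def augIdeal (n : ℕ) : Ideal (ZC n) :=
  RingHom.ker (aug n).toRingHom

namespace AugAux

abbrev G (n : ℕ) := Multiplicative (ZMod n)

noncomputable def gg (n : ℕ) : ZC n :=
  MonoidAlgebra.of ℤ (G n) (Multiplicative.ofAdd 1)

noncomputable def sig (n : ℕ) : ZC n := gg n - 1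

noncomputable def Nrm (n : ℕ) [NeZero n] : ZC n :=
  ∑ b : G n, MonoidAlgebra.of ℤ (G n) b

lemma aug_of (n : ℕ) (a : G n) : aug n (MonoidAlgebra.of ℤ (G n) a) = 1 := by
  simp [aug, MonoidAlgebra.lift_of]

lemma aug_single (n : ℕ) (a : G n) (b : ℤ) :
    aug n (MonoidAlgebra.single a b) = b := by
  have : (MonoidAlgebra.single a b : ZC n) = b • MonoidAlgebra.of ℤ (G n) a := by
    simp [MonoidAlgebra.of_apply, Finsupp.smul_single]
  rw [this, map_zsmul, aug_of, smul_eq_mul, mul_one]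

lemma mem_augIdeal_iff (n : ℕ) (x : ZC n) : x ∈ augIdeal n ↔ aug n x = 0 := by
  simp [augIdeal, RingHom.mem_ker]

lemma exists_pow (n : ℕ) [NeZero n] (a : G n) :
    ∃ k : ℕ, (Multiplicative.ofAdd (1 : ZMod n)) ^ k = a := by
  refine ⟨(a.toAdd).val, ?_⟩
  rw [← ofAdd_nsmul]
  simp [nsmul_eq_mul, ZMod.natCast_val, ZMod.cast_id]

lemma of_sub_one_mem (n : ℕ) [NeZero n] (a : G n) :
    (MonoidAlgebra.of ℤ (G n) a) - 1 ∈ Ideal.span {sig n} := by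
  obtain ⟨k, hk⟩ := exists_pow n a
  have : (MonoidAlgebra.of ℤ (G n) a) = gg n ^ k := by
    rw [← hk, map_pow]; rfl
  rw [this]
  rw [Ideal.mem_span_singleton']
  exact ⟨∑ i ∈ Finset.range k, gg n ^ i, geom_sum_mul _ _⟩

lemma augIdeal_eq_span (n : ℕ) [NeZero n] : augIdeal n = Ideal.span {sig n} := by
  apply le_antisymm
  · intro x hx
    rw [mem_augIdeal_iff] at hx
    have hx2 : x = ∑ a ∈ x.coeff.support, MonoidAlgebra.single a (x.coeff a) := by
      conv_lhs => rw [← MonoidAlgebra.sum_coeff_single x]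
      rfl
    have hsingle : ∀ a : G n, (MonoidAlgebra.single a (x.coeff a) : ZC n)
        = (x.coeff a) • MonoidAlgebra.of ℤ (G n) a := by
      intro a
      simp [MonoidAlgebra.of_apply, Finsupp.smul_single]
    have haug : ∑ a ∈ x.coeff.support, x.coeff a = 0 := by
      have := congrArg (aug n) hx2
      rw [map_sum] at this
      simp only [aug_single] at this
      rw [← this, hx]
    have key : x = ∑ a ∈ x.coeff.support, (x.coeff a) • (MonoidAlgebra.of ℤ (G n) a - 1) := by
      rw [Finset.sum_congr rfl (fun a _ => smul_sub (x.coeff a) (MonoidAlgebra.of ℤ (G n) a) 1),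
        Finset.sum_sub_distrib, ← Finset.sum_smul, haug, zero_smul, sub_zero]
      conv_lhs => rw [hx2]
      exact Finset.sum_congr rfl (fun a _ => hsingle a)
    rw [key]
    exact Submodule.sum_mem _ (fun a _ => zsmul_mem (of_sub_one_mem n a) (x.coeff a))
  · rw [Ideal.span_le, Set.singleton_subset_iff, SetLike.mem_coe, mem_augIdeal_iff,
      sig, map_sub, map_one, gg, aug_of, sub_self]

lemma Nrm_mul_of (n : ℕ) [NeZero n] (a : G n) :
    Nrm n * MonoidAlgebra.of ℤ (G n) a = Nrm n := by
  rw [Nrm, Finset.sum_mul]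
  rw [← Equiv.sum_comp (Equiv.mulRight a) (fun b => MonoidAlgebra.of ℤ (G n) b)]
  exact Finset.sum_congr rfl (fun b _ => (map_mul (MonoidAlgebra.of ℤ (G n)) b a).symm)

lemma Nrm_mul (n : ℕ) [NeZero n] (z : ZC n) :
    Nrm n * z = (aug n z) • Nrm n := by
  have h : (LinearMap.mulLeft ℤ (Nrm n) : ZC n →ₗ[ℤ] ZC n)
      = (LinearMap.toSpanSingleton ℤ (ZC n) (Nrm n)).comp (aug n).toLinearMap := by
    apply MonoidAlgebra.lhom_ext'
    intro a
    apply LinearMap.ext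
    intro b
    simp only [LinearMap.comp_apply, MonoidAlgebra.lsingle_apply, LinearMap.mulLeft_apply,
      AlgHom.toLinearMap_apply, aug_single, LinearMap.toSpanSingleton_apply]
    have : (MonoidAlgebra.single a b : ZC n) = b • MonoidAlgebra.of ℤ (G n) a := by
      simp [MonoidAlgebra.of_apply, Finsupp.smul_single]
    rw [this, mul_smul_comm, Nrm_mul_of]
  have := LinearMap.congr_fun h z
  simpa using this

lemma aug_Nrm (n : ℕ) [NeZero n] : aug n (Nrm n) = n := by
  rw [Nrm, map_sum]
  simp only [aug_of]
  simp [ZMod.card]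

lemma Nrm_smul_inj (n : ℕ) (hn : 0 < n) [NeZero n] (c : ℤ) (h : c • Nrm n = 0) : c = 0 := by
  have := congrArg (aug n) h
  rw [map_zsmul, aug_Nrm, map_zero, smul_eq_mul] at this
  have hn' : (n : ℤ) ≠ 0 := Int.natCast_ne_zero.mpr hn.ne'
  exact (mul_eq_zero.mp this).resolve_right hn'

lemma Nrm_mul_sig (n : ℕ) [NeZero n] : Nrm n * sig n = 0 := by
  rw [sig, mul_sub, mul_one, gg, Nrm_mul_of n (Multiplicative.ofAdd 1), sub_self]

lemma sig_mem (n : ℕ) : sig n ∈ augIdeal n := by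
  rw [mem_augIdeal_iff, sig, map_sub, map_one, gg, aug_of, sub_self]


section Maps
set_option linter.unusedSectionVars false

variable (n : ℕ) [NeZero n] (J : Type) [AddCommGroup J] [Module (ZC n) J]
  (φ : (J × ZC n) ≃ₗ[ZC n] (↥(augIdeal n) × ZC n))

/-- The embedding `J × R → R × R` induced by `φ` and the inclusion `I ⊆ R`. -/
noncomputable def jmap : (J × ZC n) →ₗ[ZC n] (ZC n × ZC n) :=
  (((augIdeal n).subtype).prodMap LinearMap.id).comp φ.toLinearMap

@[simp] lemma jmap_apply (m : J × ZC n) :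
    jmap n J φ m = (((φ m).1 : ZC n), (φ m).2) := rfl

lemma jmap_inj : Function.Injective (jmap n J φ) := by
  intro p q hpq
  apply φ.injective
  have h1 := congrArg Prod.fst hpq
  have h2 := congrArg Prod.snd hpq
  exact Prod.ext (Subtype.ext h1) h2

lemma range_jmap :
    LinearMap.range (jmap n J φ) = Submodule.prod (augIdeal n) ⊤ := by
  apply le_antisymm
  · rintro _ ⟨m, rfl⟩
    exact Submodule.mem_prod.mpr ⟨(φ m).1.2, trivial⟩
  · rintro ⟨w1, w2⟩ hw
    obtain ⟨hw1, -⟩ := Submodule.mem_prod.mp hw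
    exact ⟨φ.symm (⟨w1, hw1⟩, w2), by simp⟩

/-- The image of `J` inside `R × R`. -/
noncomputable def Jsub : Submodule (ZC n) (ZC n × ZC n) :=
  Submodule.map (jmap n J φ) (LinearMap.range (LinearMap.inl (ZC n) J (ZC n)))

lemma mem_Jsub_iff (w : ZC n × ZC n) :
    w ∈ Jsub n J φ ↔ ∃ m : J, jmap n J φ (m, 0) = w := by
  constructor
  · rintro ⟨m, ⟨m', rfl⟩, rfl⟩
    exact ⟨m', rfl⟩
  · rintro ⟨m, rfl⟩
    exact ⟨(m, 0), ⟨m, rfl⟩, rfl⟩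

/-- The quotient `X = (R × R) / j(J)`. -/
noncomputable abbrev Xq : Type := (ZC n × ZC n) ⧸ (Jsub n J φ)

noncomputable def piq : (ZC n × ZC n) →ₗ[ZC n] Xq n J φ := (Jsub n J φ).mkQ

/-- `ε` on the first coordinate, valued in `R ⧸ I`. -/
noncomputable def epr : (ZC n × ZC n) →ₗ[ZC n] (ZC n ⧸ augIdeal n) :=
  (augIdeal n).mkQ.comp (LinearMap.fst (ZC n) (ZC n) (ZC n))

@[simp] lemma epr_apply (w : ZC n × ZC n) :
    epr n w = Submodule.Quotient.mk w.1 := rfl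

lemma Jsub_le_ker : Jsub n J φ ≤ LinearMap.ker (epr n) := by
  intro w hw
  obtain ⟨m, rfl⟩ := (mem_Jsub_iff n J φ w).mp hw
  simp only [LinearMap.mem_ker, jmap_apply, epr_apply]
  rw [Submodule.Quotient.mk_eq_zero]
  exact (φ (m, 0)).1.2

/-- The induced map `e : X → R ⧸ I`. -/
noncomputable def eq' : Xq n J φ →ₗ[ZC n] (ZC n ⧸ augIdeal n) :=
  Submodule.liftQ _ (epr n) (Jsub_le_ker n J φ)

@[simp] lemma eq'_mk (w : ZC n × ZC n) :
    eq' n J φ (Submodule.Quotient.mk w) = Submodule.Quotient.mk w.1 := rfl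

/-- The map `τ : R → X`, `r ↦ [j (0, r)]`. -/
noncomputable def tau : ZC n →ₗ[ZC n] Xq n J φ :=
  (piq n J φ).comp ((jmap n J φ).comp (LinearMap.inr (ZC n) J (ZC n)))

@[simp] lemma tau_apply (r : ZC n) :
    tau n J φ r = Submodule.Quotient.mk (jmap n J φ (0, r)) := rfl

lemma tau_inj : Function.Injective (tau n J φ) := by
  intro r s hrs
  rw [tau_apply, tau_apply, Submodule.Quotient.eq, ← map_sub, mem_Jsub_iff] at hrs
  obtain ⟨m, hm⟩ := hrs
  have heq := jmap_inj n J φ hm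
  have h2 : (0 : ZC n) = ((0, r) - (0, s) : J × ZC n).2 := congrArg Prod.snd heq
  simp only [Prod.snd_sub] at h2
  exact sub_eq_zero.mp h2.symm

lemma range_tau : LinearMap.range (tau n J φ) = LinearMap.ker (eq' n J φ) := by
  apply le_antisymm
  · rintro _ ⟨r, rfl⟩
    simp only [LinearMap.mem_ker, tau_apply, eq'_mk, jmap_apply]
    rw [Submodule.Quotient.mk_eq_zero]
    exact (φ (0, r)).1.2
  · rintro x hx
    obtain ⟨w, rfl⟩ := Submodule.Quotient.mk_surjective _ x
    have hw1 : w.1 ∈ augIdeal n := by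
      rw [LinearMap.mem_ker] at hx
      rw [eq'_mk] at hx
      rwa [Submodule.Quotient.mk_eq_zero] at hx
    have hwr : w ∈ LinearMap.range (jmap n J φ) := by
      rw [range_jmap]
      exact Submodule.mem_prod.mpr ⟨hw1, trivial⟩
    obtain ⟨m, rfl⟩ := hwr
    refine ⟨m.2, ?_⟩
    rw [tau_apply, Submodule.Quotient.eq, ← map_sub, mem_Jsub_iff]
    refine ⟨-m.1, ?_⟩
    congr 1
    exact Prod.ext (by simp) (by simp)

end Maps

end AugAux

open AugAux in
set_option maxHeartbeats 2000000 in
/-- If `ℤ[C_n]` has stably free cancellation and `J ⊕ ℤ[C_n] ≅ I(C_n) ⊕ ℤ[C_n]`,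
then `J ≅ I(C_n)`. -/
theorem iso_augIdeal_of_stable_iso (n : ℕ) (hn : 0 < n)
    (J : Type) [AddCommGroup J] [Module (ZC n) J]
    (hSFC : ∀ (P : Type) [AddCommGroup P] [Module (ZC n) P] (a b : ℕ),
      ((P × (Fin a → ZC n)) ≃ₗ[ZC n] (Fin b → ZC n)) →
        ∃ c : ℕ, Nonempty (P ≃ₗ[ZC n] (Fin c → ZC n)))
    (hiso : Nonempty ((J × ZC n) ≃ₗ[ZC n] (↥(augIdeal n) × ZC n))) :
    Nonempty (J ≃ₗ[ZC n] ↥(augIdeal n)) := by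
  classical
  haveI : NeZero n := ⟨hn.ne'⟩
  haveI : Nontrivial (ZC n) := by
    refine nontrivial_of_ne 1 0 (fun h => ?_)
    have h2 := congrArg (aug n) h
    rw [map_one, map_zero] at h2
    exact one_ne_zero h2
  obtain ⟨φ⟩ := hiso
  -- Step 1: construct the `G`-fixed element `x` of `X` with `e x = [1]`.
  set y : Xq n J φ := piq n J φ (1, 0) with hy
  have hy_e : eq' n J φ y = Submodule.Quotient.mk 1 := rfl
  have hz'mem : sig n • y ∈ LinearMap.range (tau n J φ) := by
    rw [range_tau, LinearMap.mem_ker, map_smul, hy_e, ← Submodule.Quotient.mk_smul,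
      smul_eq_mul, mul_one, Submodule.Quotient.mk_eq_zero]
    exact sig_mem n
  obtain ⟨z, hz⟩ := hz'mem
  have hNz : Nrm n * z = 0 := by
    apply tau_inj n J φ
    have h1 : tau n J φ (Nrm n • z) = (Nrm n * sig n) • y := by
      rw [map_smul, hz, smul_smul]
    rw [smul_eq_mul] at h1
    rw [h1, Nrm_mul_sig, zero_smul, map_zero]
  have haugz : aug n z = 0 := by
    have h1 := Nrm_mul n z
    rw [hNz] at h1
    exact Nrm_smul_inj n hn (aug n z) h1.symm
  have hzI : z ∈ Ideal.span {sig n} := by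
    rw [← augIdeal_eq_span, mem_augIdeal_iff]; exact haugz
  obtain ⟨a, ha⟩ := Ideal.mem_span_singleton'.mp hzI
  set x : Xq n J φ := y - tau n J φ a with hx
  have h1 : sig n • tau n J φ a = sig n • y := by
    rw [← map_smul, smul_eq_mul, mul_comm, ha, hz]
  have hsigx : sig n • x = 0 := by rw [hx, smul_sub, h1, sub_self]
  have hgx : gg n • x = x := by
    have h2 := hsigx
    rw [sig, sub_smul, one_smul, sub_eq_zero] at h2
    exact h2
  have hofx : ∀ b : G n, MonoidAlgebra.of ℤ (G n) b • x = x := by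
    intro b
    obtain ⟨k, hk⟩ := exists_pow n b
    have hpow : ∀ k : ℕ, (gg n) ^ k • x = x := by
      intro k
      induction k with
      | zero => simp
      | succ k ih => rw [pow_succ, mul_smul, hgx, ih]
    have hofb : MonoidAlgebra.of ℤ (G n) b = gg n ^ k := by
      rw [← hk, map_pow]; rfl
    rw [hofb, hpow k]
  have hfix : ∀ r : ZC n, r • x = aug n r • x := by
    have hmaps : ((LinearMap.toSpanSingleton (ZC n) (Xq n J φ) x).restrictScalars ℤ)
        = (LinearMap.toSpanSingleton ℤ (Xq n J φ) x).comp (aug n).toLinearMap := by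
      apply MonoidAlgebra.lhom_ext'
      intro b
      apply LinearMap.ext
      intro c
      simp only [LinearMap.comp_apply, MonoidAlgebra.lsingle_apply,
        LinearMap.restrictScalars_apply, LinearMap.toSpanSingleton_apply,
        AlgHom.toLinearMap_apply, aug_single]
      have hs : (MonoidAlgebra.single b c : ZC n) = c • MonoidAlgebra.of ℤ (G n) b := by
        simp [MonoidAlgebra.of_apply, Finsupp.smul_single]
      rw [hs, smul_assoc, hofx]
    intro r
    have h2 := LinearMap.congr_fun hmaps r
    simpa using h2
  -- Step 2: the retraction `rho` and the projection `hmap`.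
  have hrho_smul : ∀ (r : ZC n) (w : ZC n × ZC n),
      piq n J φ (r • w) - aug n ((r • w).1) • x
        = r • (piq n J φ w - aug n w.1 • x) := by
    intro r w
    have hfst : (r • w).1 = r * w.1 := rfl
    have h1 : aug n ((r • w).1) • x = r • (aug n w.1 • x) := by
      rw [hfst, map_mul, mul_comm, mul_smul, ← hfix r, smul_comm]
    rw [map_smul, h1]
    exact (smul_sub r _ _).symm
  let rho : (ZC n × ZC n) →ₗ[ZC n] Xq n J φ :=
    { toFun := fun w => piq n J φ w - aug n w.1 • x
      map_add' := by
        intro w v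
        simp only [map_add, Prod.fst_add, add_smul]
        abel
      map_smul' := fun r w => by
        simpa using hrho_smul r w }
  have hex : eq' n J φ x = Submodule.Quotient.mk 1 := by
    have htau0 : eq' n J φ (tau n J φ a) = 0 := by
      have hmem : tau n J φ a ∈ LinearMap.ker (eq' n J φ) := by
        rw [← range_tau]; exact ⟨a, rfl⟩
      exact hmem
    rw [hx, map_sub, htau0, sub_zero, hy_e]
  have hrho_mem : ∀ w, rho w ∈ LinearMap.range (tau n J φ) := by
    intro w
    rw [range_tau, LinearMap.mem_ker]
    show eq' n J φ (piq n J φ w - aug n w.1 • x) = 0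
    have h1 : eq' n J φ (piq n J φ w) = (augIdeal n).mkQ w.1 := rfl
    rw [map_sub, map_zsmul, hex, h1]
    have h2 : (Submodule.Quotient.mk 1 : ZC n ⧸ augIdeal n) = (augIdeal n).mkQ 1 := rfl
    rw [h2, ← map_zsmul, ← map_sub, Submodule.mkQ_apply, Submodule.Quotient.mk_eq_zero,
      mem_augIdeal_iff, map_sub, map_zsmul, map_one, smul_eq_mul, mul_one, sub_self]
  let tauEquiv := LinearEquiv.ofInjective (tau n J φ) (tau_inj n J φ)
  let hmap : (ZC n × ZC n) →ₗ[ZC n] ZC n :=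
    (tauEquiv.symm.toLinearMap).comp (LinearMap.codRestrict _ rho hrho_mem)
  have htau_h : ∀ w, tau n J φ (hmap w) = rho w := by
    intro w
    have h2 := congrArg Subtype.val
      (tauEquiv.apply_symm_apply ⟨rho w, hrho_mem w⟩)
    rw [LinearEquiv.ofInjective_apply] at h2
    exact h2
  have hsec : ∀ r : ZC n, hmap (jmap n J φ (0, r)) = r := by
    intro r
    apply tau_inj n J φ
    rw [htau_h]
    show piq n J φ (jmap n J φ (0, r)) - aug n ((jmap n J φ (0, r)).1) • x
      = tau n J φ r
    have h0 : aug n ((jmap n J φ (0, r)).1) = 0 :=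
      (mem_augIdeal_iff n _).mp (φ (0, r)).1.2
    rw [h0, zero_smul, sub_zero]
    rfl
  -- Step 3: `K = ker hmap` satisfies `K ⊕ R ≅ R²`, hence is free of rank 1.
  set K : Submodule (ZC n) (ZC n × ZC n) := LinearMap.ker hmap with hKdef
  let sigma' : ZC n →ₗ[ZC n] (ZC n × ZC n) :=
    (jmap n J φ).comp (LinearMap.inr (ZC n) J (ZC n))
  have hsec' : ∀ r, hmap (sigma' r) = r := hsec
  have hsig'inj : Function.Injective sigma' := by
    intro r s h
    have h2 := congrArg hmap h
    rwa [hsec', hsec'] at h2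
  have hcompl : IsCompl K (LinearMap.range sigma') := by
    constructor
    · rw [disjoint_iff_inf_le]
      rintro w ⟨hw1, r, rfl⟩
      have hr : r = 0 := by rw [← hsec' r]; exact hw1
      rw [hr, map_zero]
      exact Submodule.zero_mem ⊥
    · rw [codisjoint_iff_le_sup]
      intro w _
      rw [Submodule.mem_sup]
      refine ⟨w - sigma' (hmap w), ?_, sigma' (hmap w), ⟨hmap w, rfl⟩, by abel⟩
      rw [hKdef, LinearMap.mem_ker, map_sub, hsec', sub_self]
  let e_a : (Fin 1 → ZC n) ≃ₗ[ZC n] ↥(LinearMap.range sigma') :=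
    (LinearEquiv.funUnique (Fin 1) (ZC n) (ZC n)) ≪≫ₗ
      LinearEquiv.ofInjective sigma' hsig'inj
  let e_b : (↥K × (Fin 1 → ZC n)) ≃ₗ[ZC n] (↥K × ↥(LinearMap.range sigma')) :=
    LinearEquiv.prodCongr (LinearEquiv.refl (ZC n) ↥K) e_a
  let e_c : (↥K × ↥(LinearMap.range sigma')) ≃ₗ[ZC n] (ZC n × ZC n) :=
    Submodule.prodEquivOfIsCompl K (LinearMap.range sigma') hcompl
  let E1 : (↥K × (Fin 1 → ZC n)) ≃ₗ[ZC n] (Fin 2 → ZC n) :=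
    e_b ≪≫ₗ e_c ≪≫ₗ (LinearEquiv.finTwoArrow (ZC n) (ZC n)).symm
  obtain ⟨c, ⟨ψ⟩⟩ := hSFC (↥K) 1 2 E1
  haveI : StrongRankCondition (ZC n) := commRing_strongRankCondition (ZC n)
  haveI : Module.Free (ZC n) ↥K := Module.Free.of_equiv ψ.symm
  haveI : Module.Finite (ZC n) ↥K := Module.Finite.equiv ψ.symm
  have hc : c = 1 := by
    have h2 : Module.finrank (ZC n) (↥K × (Fin 1 → ZC n)) = 2 := by
      rw [LinearEquiv.finrank_eq E1, Module.finrank_fin_fun]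
    rw [Module.finrank_prod, Module.finrank_fin_fun] at h2
    have h3 : Module.finrank (ZC n) ↥K = c := by
      rw [LinearEquiv.finrank_eq ψ, Module.finrank_fin_fun]
    omega
  subst hc
  let eqK : ↥K ≃ₗ[ZC n] ZC n :=
    ψ.trans (LinearEquiv.funUnique (Fin 1) (ZC n) (ZC n))
  -- Step 4: `J ≅ ker (v : K → R ⧸ I)` and `ker v` corresponds to `I` under `eqK`.
  let v : ↥K →ₗ[ZC n] (ZC n ⧸ augIdeal n) := (epr n).comp K.subtype
  have hjJmem : ∀ w : J, jmap n J φ (w, 0) ∈ K := by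
    intro w
    rw [hKdef, LinearMap.mem_ker]
    apply tau_inj n J φ
    rw [htau_h, map_zero]
    show piq n J φ (jmap n J φ (w, 0)) - aug n ((jmap n J φ (w, 0)).1) • x = 0
    have hp : piq n J φ (jmap n J φ (w, 0)) = 0 := by
      rw [piq, Submodule.mkQ_apply, Submodule.Quotient.mk_eq_zero]
      exact (mem_Jsub_iff n J φ _).mpr ⟨w, rfl⟩
    have h0 : aug n ((jmap n J φ (w, 0)).1) = 0 :=
      (mem_augIdeal_iff n _).mp (φ (w, 0)).1.2
    rw [hp, h0, zero_smul, sub_zero]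
  let jJ : J →ₗ[ZC n] ↥K :=
    LinearMap.codRestrict K ((jmap n J φ).comp (LinearMap.inl (ZC n) J (ZC n))) hjJmem
  have hjJinj : Function.Injective jJ := by
    intro w w' h
    have h2 := congrArg Subtype.val h
    have h3 : jmap n J φ (w, 0) = jmap n J φ (w', 0) := h2
    exact congrArg Prod.fst (jmap_inj n J φ h3)
  have hrangejJ : LinearMap.range jJ = LinearMap.ker v := by
    apply le_antisymm
    · rintro _ ⟨w, rfl⟩
      rw [LinearMap.mem_ker]
      show epr n (jmap n J φ (w, 0)) = 0
      rw [epr_apply, Submodule.Quotient.mk_eq_zero]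
      exact (φ (w, 0)).1.2
    · rintro k hk
      have hk1 : (k : ZC n × ZC n).1 ∈ augIdeal n := by
        have h0 : epr n (k : ZC n × ZC n) = 0 := hk
        rwa [epr_apply, Submodule.Quotient.mk_eq_zero] at h0
      have hkr : (k : ZC n × ZC n) ∈ LinearMap.range (jmap n J φ) := by
        rw [range_jmap]
        exact Submodule.mem_prod.mpr ⟨hk1, trivial⟩
      obtain ⟨m, hm⟩ := hkr
      have hsplit : jmap n J φ m = jmap n J φ (m.1, 0) + jmap n J φ (0, m.2) := by
        rw [← map_add]
        congr 1
        exact Prod.ext (by simp) (by simp)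
      have hm2 : m.2 = 0 := by
        have h0 : hmap (k : ZC n × ZC n) = 0 := k.2
        rw [← hm, hsplit, map_add, hsec] at h0
        have h1' : hmap (jmap n J φ (m.1, 0)) = 0 := hjJmem m.1
        rw [h1', zero_add] at h0
        exact h0
      refine ⟨m.1, Subtype.ext ?_⟩
      show jmap n J φ (m.1, 0) = (k : ZC n × ZC n)
      rw [← hm]
      congr 1
      exact Prod.ext rfl hm2.symm
  -- surjectivity of `v`
  set d : ZC n := hmap (1, 0) with hd
  have hk0K : ((1, 0) : ZC n × ZC n) - jmap n J φ (0, d) ∈ K := by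
    rw [hKdef, LinearMap.mem_ker, map_sub, hsec, ← hd, sub_self]
  have hvk0 : v ⟨_, hk0K⟩ = Submodule.Quotient.mk (1 : ZC n) := by
    show epr n (((1, 0) : ZC n × ZC n) - jmap n J φ (0, d)) = _
    rw [map_sub]
    have h2 : epr n (jmap n J φ (0, d)) = 0 := by
      rw [epr_apply, Submodule.Quotient.mk_eq_zero]
      exact (φ (0, d)).1.2
    rw [h2, sub_zero]
    rfl
  let v' : ZC n →ₗ[ZC n] (ZC n ⧸ augIdeal n) := v.comp eqK.symm.toLinearMap
  have hvsurj : Function.Surjective v' := by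
    intro q
    obtain ⟨r, rfl⟩ := Submodule.Quotient.mk_surjective _ q
    refine ⟨eqK (r • ⟨_, hk0K⟩), ?_⟩
    show v (eqK.symm (eqK _)) = _
    rw [eqK.symm_apply_apply, map_smul, hvk0, ← Submodule.Quotient.mk_smul,
      smul_eq_mul, mul_one]
  obtain ⟨c₀, hc₀⟩ := Submodule.Quotient.mk_surjective _ (v' 1)
  have hval : ∀ r : ZC n, v' r = Submodule.Quotient.mk (r * c₀) := by
    intro r
    have h2 : v' r = r • v' 1 := by rw [← map_smul, smul_eq_mul, mul_one]
    rw [h2, ← hc₀, ← Submodule.Quotient.mk_smul, smul_eq_mul]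
  have hc₀ne : aug n c₀ ≠ 0 := by
    obtain ⟨d', hd'⟩ := hvsurj (Submodule.Quotient.mk 1)
    rw [hval] at hd'
    rw [Submodule.Quotient.eq] at hd'
    have h2 : aug n (d' * c₀ - 1) = 0 := (mem_augIdeal_iff n _).mp hd'
    rw [map_sub, map_mul, map_one, sub_eq_zero] at h2
    intro h0
    rw [h0, mul_zero] at h2
    exact one_ne_zero h2.symm
  have hkerv' : LinearMap.ker v' = augIdeal n := by
    ext r
    rw [LinearMap.mem_ker, hval, Submodule.Quotient.mk_eq_zero, mem_augIdeal_iff,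
      mem_augIdeal_iff, map_mul]
    constructor
    · intro h0
      rcases mul_eq_zero.mp h0 with h0' | h0'
      · exact h0'
      · exact absurd h0' hc₀ne
    · intro h0
      rw [h0, zero_mul]
  have hmapK : Submodule.map (eqK : ↥K →ₗ[ZC n] ZC n) (LinearMap.ker v)
      = augIdeal n := by
    ext r
    rw [Submodule.mem_map_equiv]
    have hiff : (eqK.symm r ∈ LinearMap.ker v) ↔ r ∈ LinearMap.ker v' := Iff.rfl
    rw [hiff, hkerv']
  exact ⟨(((LinearEquiv.ofInjective jJ hjJinj).trans
      (LinearEquiv.ofEq _ _ hrangejJ)).trans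
      (eqK.submoduleMap (LinearMap.ker v))).trans
      (LinearEquiv.ofEq _ _ hmapK)⟩
end

section
/- Let n ≥ 2, let C_n = ⟨y⟩ be cyclic of order n, and let J = (y-1)·ℤ[C_n] be the ideal of ℤ[C_n] generated by y−1 (equal to the augmentation ideal). If r is an integer with 1 ≤ r ≤ n−1 and gcd(r,n) = 1, then multiplication by 1 + y + ⋯ + y^{r-1} is an automorphism of J as a ℤ[C_n]-module. -/
/-- The generator `y` of `C_n`, viewed inside `ℤ[C_n]`. -/
noncomputable def gen (n : ℕ) : ZC n :=
  MonoidAlgebra.of ℤ (Multiplicative (ZMod n)) (Multiplicative.ofAdd 1)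

lemma gen_pow (n m : ℕ) :
    gen n ^ m = MonoidAlgebra.of ℤ (Multiplicative (ZMod n))
      (Multiplicative.ofAdd (m : ZMod n)) := by
  rw [gen, ← map_pow]
  congr 1
  rw [← ofAdd_nsmul]
  simp [nsmul_eq_mul]

/-- If `gcd(r,n) = 1` with `1 ≤ r ≤ n-1`, then multiplication by `1 + y + ⋯ + y^{r-1}`
is an automorphism of the ideal `J = (y-1)·ℤ[C_n]`. -/
theorem mul_geomSum_bijOn_span (n : ℕ) (hn : 2 ≤ n) (r : ℕ)
    (hr1 : 1 ≤ r) (hr2 : r ≤ n - 1) (hgcd : Nat.gcd r n = 1) :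
    Set.BijOn (fun a : ZC n => a * ∑ k ∈ Finset.range r, (gen n) ^ k)
      (↑(Ideal.span {gen n - 1}) : Set (ZC n)) (↑(Ideal.span {gen n - 1})) := by
  haveI : NeZero n := ⟨by omega⟩
  set g := gen n with hg
  set σ : ZC n := ∑ k ∈ Finset.range r, g ^ k with hσ
  -- choose s with r * s ≡ 1 [MOD n]
  set u : (ZMod n)ˣ := ZMod.unitOfCoprime r hgcd with hu'
  have hu : (↑u : ZMod n) = (r : ZMod n) := ZMod.coe_unitOfCoprime r hgcd
  set s : ℕ := (↑u⁻¹ : ZMod n).val with hs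
  have hrs : ((r * s : ℕ) : ZMod n) = 1 := by
    push_cast [hs]
    rw [ZMod.natCast_val, ZMod.cast_id, ← hu, ← Units.val_mul, mul_inv_cancel, Units.val_one]
  -- inverse multiplier
  set τ : ZC n := ∑ k ∈ Finset.range s, (g ^ r) ^ k with hτ
  have key : (g - 1) * (σ * τ) = g - 1 := by
    have h1 : σ * (g - 1) = g ^ r - 1 := geom_sum_mul g r
    have h2 : τ * (g ^ r - 1) = (g ^ r) ^ s - 1 := geom_sum_mul (g ^ r) s
    have h3 : (g ^ r) ^ s = g := by
      rw [← pow_mul, gen_pow, hrs, hg, gen]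
    calc (g - 1) * (σ * τ) = τ * (σ * (g - 1)) := by ring
      _ = τ * (g ^ r - 1) := by rw [h1]
      _ = g - 1 := by rw [h2, h3]
  have cancel : ∀ x ∈ Ideal.span {g - 1}, x * σ * τ = x := by
    intro x hx
    obtain ⟨c, rfl⟩ := Ideal.mem_span_singleton'.mp hx
    calc c * (g - 1) * σ * τ = c * ((g - 1) * (σ * τ)) := by ring
      _ = c * (g - 1) := by rw [key]
  refine ⟨fun x hx => ?_, fun x hx y hy hxy => ?_, fun x hx => ?_⟩
  · exact Ideal.mul_mem_right σ _ hx
  · simp only at hxy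
    rw [← cancel x hx, ← cancel y hy, hxy]
  · refine ⟨x * τ, Ideal.mul_mem_right τ _ hx, ?_⟩
    simp only
    calc x * τ * σ = x * σ * τ := by ring
      _ = x := cancel x hx
end
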